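/- Let p ∈ [0,1] and let (y_t)_{t≥1} be a sequence with y_t ∈ {0,1} such that for every t ≥ 2: y_t = 1 if (1/(t−1))·∑_{i=1}^{t−1} y_i ≤ p, and y_t = 0 otherwise (y_1 ∈ {0,1} arbitrary). Then for every t ≥ 1, the outcome fairness value satisfies (1/t)·∑_{i=1}^{t} y_i ∈ [max(0, p − 1/t), min(1, p + 1/t)]. -/

import Mathlib

/-- the process-agnostic outcome-fairness enforcer keeps the outcome
fairness value within `[max 0 (p - 1/t), min 1 (p + 1/t)]` at all times `t ≥ 1`. -/
theorem outcome_fairness_enforcement (p : ℝ) (hp : p ∈ Set.Icc (0:ℝ) 1)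
    (y : ℕ → ℝ) (hy1 : y 1 ∈ ({0, 1} : Set ℝ))
    (hrec : ∀ t : ℕ, 2 ≤ t →
      y t = if (1 / ((t:ℝ) - 1)) * ∑ i ∈ Finset.Icc 1 (t - 1), y i ≤ p then 1 else 0) :
    ∀ t : ℕ, 1 ≤ t →
      (1 / (t:ℝ)) * ∑ i ∈ Finset.Icc 1 t, y i ∈
        Set.Icc (max 0 (p - 1 / (t:ℝ))) (min 1 (p + 1 / (t:ℝ))) := by
  obtain ⟨hp0, hp1⟩ := hp
  have key : ∀ t : ℕ, 1 ≤ t →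
      p * t - 1 ≤ (∑ i ∈ Finset.Icc 1 t, y i) ∧
      (∑ i ∈ Finset.Icc 1 t, y i) ≤ p * t + 1 ∧
      0 ≤ (∑ i ∈ Finset.Icc 1 t, y i) ∧
      (∑ i ∈ Finset.Icc 1 t, y i) ≤ t := by
    intro t ht
    induction t, ht using Nat.le_induction with
    | base =>
      simp only [Set.mem_insert_iff, Set.mem_singleton_iff] at hy1
      simp only [Finset.Icc_self, Finset.sum_singleton, Nat.cast_one]
      rcases hy1 with h | h <;> rw [h] <;>
        exact ⟨by nlinarith, by nlinarith, by norm_num, by norm_num⟩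
    | succ t ht ih =>
      obtain ⟨ih1, ih2, ih3, ih4⟩ := ih
      have hsum : (∑ i ∈ Finset.Icc 1 (t+1), y i) = (∑ i ∈ Finset.Icc 1 t, y i) + y (t+1) :=
        Finset.sum_Icc_succ_top (by omega) y
      have hrec' := hrec (t+1) (by omega)
      have htcast : ((t:ℝ)+1) - 1 = (t:ℝ) := by ring
      have ht0 : (0:ℝ) < t := by exact_mod_cast ht
      simp only [Nat.add_sub_cancel, Nat.cast_add, Nat.cast_one, htcast] at hrec'
      rw [hsum, hrec']
      by_cases hc : (1 / (t:ℝ)) * ∑ i ∈ Finset.Icc 1 t, y i ≤ p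
      · rw [if_pos hc]
        have hle : (∑ i ∈ Finset.Icc 1 t, y i) ≤ p * t := by
          rw [div_mul_eq_mul_div, one_mul, div_le_iff₀ ht0] at hc; linarith
        push_cast
        refine ⟨by nlinarith, by nlinarith, by linarith, by linarith⟩
      · rw [if_neg hc]
        have hgt : p * t < (∑ i ∈ Finset.Icc 1 t, y i) := by
          push_neg at hc
          rw [div_mul_eq_mul_div, one_mul, lt_div_iff₀ ht0] at hc; linarith
        push_cast
        refine ⟨by nlinarith, by nlinarith, by linarith, by linarith⟩
  intro t ht
  obtain ⟨h1, h2, h3, h4⟩ := key t ht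
  have ht0 : (0:ℝ) < t := by exact_mod_cast ht
  constructor
  · refine max_le (by positivity) ?_
    rw [div_mul_eq_mul_div, one_mul, le_div_iff₀ ht0, sub_mul, one_div,
      inv_mul_cancel₀ ht0.ne']
    linarith
  · refine le_min ?_ ?_
    · rw [div_mul_eq_mul_div, one_mul, div_le_one ht0]; exact h4
    · rw [div_mul_eq_mul_div, one_mul, div_le_iff₀ ht0, add_mul, one_div,
        inv_mul_cancel₀ ht0.ne']
      linarith
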